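/- Let E be a finite-dimensional real inner product space and let V, W be linear subspaces of E with dim V = dim W = d ≥ 1. If δ(V, W) < 1/3, then the orthogonal projection of E onto V, restricted to W, is a linear isomorphism from W onto V. -/

import Mathlib

open Set Filter

/-- The distance `δ(L₁, L₂)`: the Hausdorff distance between `L₁ ∩ 𝕊` and `L₂ ∩ 𝕊`,
where `𝕊` is the unit sphere. -/
noncomputable def sphereDist {X : Type*} [NormedAddCommGroup X] (S T : Set X) : ℝ :=
  Metric.hausdorffDist (S ∩ Metric.sphere 0 1) (T ∩ Metric.sphere 0 1)

/-- If `V` and `W` are `d`-dimensional subspaces (`d ≥ 1`) of a finite-dimensional real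
inner product space with `δ(V, W) < 1/3`, then the orthogonal projection onto `V`
restricted to `W` is a linear isomorphism from `W` onto `V`. -/
theorem orthogonalProjection_bijective_of_sphereDist_lt {E : Type*}
    [NormedAddCommGroup E] [InnerProductSpace ℝ E] [FiniteDimensional ℝ E]
    (V W : Submodule ℝ E) (d : ℕ) (hd : 1 ≤ d)
    (hV : Module.finrank ℝ V = d) (hW : Module.finrank ℝ W = d)
    (hδ : sphereDist (V : Set E) (W : Set E) < 1 / 3) :
    Function.Bijective (fun w : W => V.orthogonalProjection (w : E)) := by
  classical
  have hedist : EMetric.hausdorffEdist ((W : Set E) ∩ Metric.sphere 0 1)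
      ((V : Set E) ∩ Metric.sphere 0 1) ≠ ⊤ := by
    apply Metric.hausdorffEdist_ne_top_of_nonempty_of_bounded
    · obtain ⟨w, hw1, hw2⟩ := Submodule.exists_mem_ne_zero_of_ne_bot (p := W) (by
        intro h; rw [h, finrank_bot] at hW; omega)
      exact ⟨‖w‖⁻¹ • w, W.smul_mem _ hw1, by
        simp [norm_smul, inv_mul_cancel₀ (norm_ne_zero_iff.mpr hw2)]⟩
    · obtain ⟨v, hv1, hv2⟩ := Submodule.exists_mem_ne_zero_of_ne_bot (p := V) (by
        intro h; rw [h, finrank_bot] at hV; omega)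
      exact ⟨‖v‖⁻¹ • v, V.smul_mem _ hv1, by
        simp [norm_smul, inv_mul_cancel₀ (norm_ne_zero_iff.mpr hv2)]⟩
    · exact (Metric.isBounded_sphere).subset inter_subset_right
    · exact (Metric.isBounded_sphere).subset inter_subset_right
  set f : W →ₗ[ℝ] V := (V.orthogonalProjection).toLinearMap.comp W.subtype with hf
  have hinj : Function.Injective f := by
    rw [← LinearMap.ker_eq_bot, Submodule.eq_bot_iff]
    rintro ⟨w, hwW⟩ hker
    have hproj : V.orthogonalProjection w = 0 := by
      simpa [f] using hker
    have hw0 : w ∈ Vᗮ := Submodule.orthogonalProjectionOnto_eq_zero_iff.mp hproj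
    by_contra hne
    have hwne : w ≠ 0 := fun h => hne (by simp [h])
    set u : E := ‖w‖⁻¹ • w with hu
    have huW : u ∈ (W : Set E) ∩ Metric.sphere 0 1 := by
      refine ⟨W.smul_mem _ hwW, ?_⟩
      simp [u, norm_smul, inv_mul_cancel₀ (norm_ne_zero_iff.mpr hwne)]
    have hd' : Metric.hausdorffDist ((W : Set E) ∩ Metric.sphere 0 1)
        ((V : Set E) ∩ Metric.sphere 0 1) < 1 / 3 := by
      rw [Metric.hausdorffDist_comm]
      exact hδ
    obtain ⟨v, hvV, hdist⟩ := Metric.exists_dist_lt_of_hausdorffDist_lt huW hd' hedist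
    have huV : u ∈ Vᗮ := Vᗮ.smul_mem _ hw0
    have hinner : (inner ℝ u v : ℝ) = 0 := by
      rw [real_inner_comm]; exact huV v hvV.1
    have hnu : ‖u‖ = 1 := by simpa using huW.2
    have hnv : ‖v‖ = 1 := by simpa using hvV.2
    have hsq : ‖u - v‖ ^ 2 = 2 := by
      rw [norm_sub_sq_real, hinner, hnu, hnv]; ring
    have h1 : ‖u - v‖ < 1 / 3 := by rw [← dist_eq_norm]; exact hdist
    nlinarith [norm_nonneg (u - v)]
  have hsurj : Function.Surjective f :=
    (LinearMap.injective_iff_surjective_of_finrank_eq_finrank (by rw [hV, hW])).mp hinj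
  exact ⟨hinj, hsurj⟩
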